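/- Let A be an n×n Hermitian circulant matrix (commuting with the cyclic shift) with n distinct eigenvalues. Then its average mixing matrix equals (1/n)·J_n: Σ_r E_r ∘ conj(E_r) = (1/n)J_n, where E_r are the rank-one spectral projections. -/

import Mathlib

open Matrix Finset

lemma aux_sum_e (n : ℕ) [NeZero n] (m : ZMod n) :
    ∑ d : ZMod n, ZMod.stdAddChar (m * d) = if m = 0 then (n : ℂ) else 0 := by
  have : ∀ d : ZMod n, ZMod.stdAddChar (m * d) = (AddChar.mulShift ZMod.stdAddChar m) d := by
    intro d; simp [AddChar.mulShift_apply]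
  simp_rw [this]
  split_ifs with h
  · subst h
    simp [AddChar.mulShift_zero, AddChar.one_apply, ZMod.card]
  · rw [AddChar.sum_eq_zero_iff_ne_zero.mpr]
    exact ZMod.isPrimitive_stdAddChar n h

theorem stmt16 {n : ℕ} (hn : 0 < n)
    (A : Matrix (Fin n) (Fin n) ℂ) (hA : A.IsHermitian)
    (hcirc : A * (Matrix.of fun i j : Fin n => if (i : ℕ) = ((j : ℕ) + 1) % n then (1 : ℂ) else 0) =
      (Matrix.of fun i j : Fin n => if (i : ℕ) = ((j : ℕ) + 1) % n then (1 : ℂ) else 0) * A)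
    (lam : Fin n → ℝ) (hlam : Function.Injective lam)
    (E : Fin n → Matrix (Fin n) (Fin n) ℂ)
    (hEP : ∀ r, E r * E r = E r) (hEH : ∀ r, (E r).IsHermitian)
    (hEO : ∀ r s, r ≠ s → E r * E s = 0)
    (hEsum : ∑ r, E r = 1)
    (hEne : ∀ r, E r ≠ 0)
    (hspec : A = ∑ r, (lam r : ℂ) • E r) :
    ∑ r, Matrix.hadamard (E r) ((E r).map (starRingEnd ℂ)) =
      ((n : ℂ))⁻¹ • Matrix.of (fun _ _ : Fin n => (1 : ℂ)) := by
  obtain ⟨N, rfl⟩ : ∃ N, n = N + 1 := ⟨n - 1, (Nat.succ_pred_eq_of_pos hn).symm⟩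
  -- move everything to the `ZMod (N+1)` world (definitional transfer from `Fin (N+1)`)
  let Z := ZMod (N + 1)
  let A' : Matrix Z Z ℂ := A
  let S : Matrix Z Z ℂ :=
    (Matrix.of fun i j : Fin (N + 1) =>
      if (i : ℕ) = ((j : ℕ) + 1) % (N + 1) then (1 : ℂ) else 0)
  let E' : Fin (N + 1) → Matrix Z Z ℂ := E
  have hcirc' : A' * S = S * A' := hcirc
  have hEP' : ∀ r, E' r * E' r = E' r := hEP
  have hEO' : ∀ r s, r ≠ s → E' r * E' s = 0 := hEO
  have hEsum' : ∑ r, E' r = 1 := hEsum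
  have hspec' : A' = ∑ r, (lam r : ℂ) • E' r := hspec
  have hEne' : ∀ r, ∃ i j : Z, E' r i j ≠ 0 := by
    intro r
    by_contra hc
    push_neg at hc
    exact hEne r (by ext i j; exact hc i j)
  have hS : ∀ i j : Z, S i j = if ZMod.val i = (ZMod.val j + 1) % (N + 1) then (1 : ℂ) else 0 :=
    fun _ _ => rfl
  -- spectral algebra
  have hAE : ∀ t, A' * E' t = (lam t : ℂ) • E' t := by
    intro t
    rw [hspec', Finset.sum_mul, Finset.sum_eq_single t]
    · rw [smul_mul_assoc, hEP']
    · intro s _ hst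
      rw [smul_mul_assoc, hEO' s t hst, smul_zero]
    · intro h; exact absurd (Finset.mem_univ t) h
  have hEA : ∀ s, E' s * A' = (lam s : ℂ) • E' s := by
    intro s
    rw [hspec', Finset.mul_sum, Finset.sum_eq_single s]
    · rw [mul_smul_comm, hEP']
    · intro t _ hts
      rw [mul_smul_comm, hEO' s t (Ne.symm hts), smul_zero]
    · intro h; exact absurd (Finset.mem_univ s) h
  have hESE : ∀ s t, s ≠ t → E' s * S * E' t = 0 := by
    intro s t hst
    have h1 : E' s * (A' * S) * E' t = (lam s : ℂ) • (E' s * S * E' t) := by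
      rw [← mul_assoc, hEA s, smul_mul_assoc, smul_mul_assoc]
    have h2 : E' s * (S * A') * E' t = (lam t : ℂ) • (E' s * S * E' t) := by
      rw [mul_assoc, mul_assoc S A' (E' t), hAE t, mul_smul_comm, mul_smul_comm, ← mul_assoc]
    have h3 : ((lam s : ℂ) - lam t) • (E' s * S * E' t) = 0 := by
      rw [sub_smul, ← h1, ← h2, hcirc', sub_self]
    rcases smul_eq_zero.mp h3 with h | h
    · exfalso
      apply hst; apply hlam
      exact_mod_cast sub_eq_zero.mp h
    · exact h
  have hSE : ∀ r, S * E' r = E' r * S := by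
    intro r
    have l1 : S * E' r = E' r * S * E' r := by
      calc S * E' r = (1 : Matrix Z Z ℂ) * (S * E' r) := (one_mul _).symm
        _ = (∑ s, E' s) * (S * E' r) := by rw [hEsum']
        _ = ∑ s, E' s * S * E' r := by rw [Finset.sum_mul]; simp_rw [mul_assoc]
        _ = E' r * S * E' r := by
            rw [Finset.sum_eq_single r]
            · intro s _ hsr
              exact hESE s r hsr
            · intro h; exact absurd (Finset.mem_univ r) h
    have l2 : E' r * S = E' r * S * E' r := by
      calc E' r * S = (E' r * S) * 1 := (mul_one _).symm
        _ = (E' r * S) * ∑ t, E' t := by rw [hEsum']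
        _ = ∑ t, E' r * S * E' t := by rw [Finset.mul_sum]
        _ = E' r * S * E' r := by
            rw [Finset.sum_eq_single r]
            · intro t _ htr
              exact hESE r t (Ne.symm htr)
            · intro h; exact absurd (Finset.mem_univ r) h
    rw [l1, ← l2]
  -- entrywise circulant structure
  have hval : ∀ k : Z, (k + 1).val = (ZMod.val k + 1) % (N + 1) := by
    intro k
    have h1 : ((ZMod.val k + 1 : ℕ) : Z) = k + 1 := by
      push_cast
      rw [ZMod.natCast_zmod_val]
    rw [← h1, ZMod.val_natCast]
  have hcond : ∀ i k : Z, (ZMod.val i = (ZMod.val k + 1) % (N + 1)) ↔ i = k + 1 := by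
    intro i k
    rw [← hval k]
    exact ⟨fun h => ZMod.val_injective _ h, fun h => by rw [h]⟩
  have hSmul : ∀ (B : Matrix Z Z ℂ) (i j : Z), (S * B) i j = B (i - 1) j := by
    intro B i j
    rw [Matrix.mul_apply]
    rw [Finset.sum_eq_single (i - 1)]
    · have hc : i = (i - 1) + 1 := by ring
      rw [hS]
      rw [if_pos ((hcond i (i - 1)).mpr hc), one_mul]
    · intro k _ hk
      have hne : ¬ i = k + 1 := fun h => hk (by rw [h]; ring)
      rw [hS]
      rw [if_neg (fun h => hne ((hcond i k).mp h)), zero_mul]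
    · intro h; exact absurd (Finset.mem_univ _) h
  have hMulS : ∀ (B : Matrix Z Z ℂ) (i j : Z), (B * S) i j = B i (j + 1) := by
    intro B i j
    rw [Matrix.mul_apply]
    rw [Finset.sum_eq_single (j + 1)]
    · rw [hS]
      rw [if_pos ((hcond (j + 1) j).mpr rfl), mul_one]
    · intro k _ hk
      rw [hS]
      rw [if_neg (fun h => hk ((hcond k j).mp h)), mul_zero]
    · intro h; exact absurd (Finset.mem_univ _) h
  have hshift : ∀ r (i j : Z), E' r (i + 1) (j + 1) = E' r i j := by
    intro r i j
    have h : (S * E' r) (i + 1) j = (E' r * S) (i + 1) j := by rw [hSE r]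
    rw [hSmul (E' r) (i + 1) j, hMulS (E' r) (i + 1) j] at h
    have h2 : (i + 1 - 1 : Z) = i := by ring
    rw [h2] at h
    exact h.symm
  have hkey : ∀ r (k : ℕ) (i j : Z), E' r (i + (k : Z)) (j + (k : Z)) = E' r i j := by
    intro r k
    induction k with
    | zero => intro i j; simp
    | succ k ih =>
      intro i j
      have hx : ∀ x : Z, x + ((k + 1 : ℕ) : Z) = (x + (k : Z)) + 1 := by
        intro x; push_cast; ring
      rw [hx, hx, hshift r, ih]
  set c : Fin (N + 1) → Z → ℂ := fun r d => E' r d 0 with hcdef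
  have hcE : ∀ r (i j : Z), E' r i j = c r (i - j) := by
    intro r i j
    have h := hkey r j.val (i - j) 0
    rw [ZMod.natCast_zmod_val] at h
    have h2 : (i - j) + j = i := by ring
    have h3 : (0 : Z) + j = j := by ring
    rw [h2, h3] at h
    exact h
  -- D: basic facts about the symbol c
  have hc_sum : ∀ d : Z, ∑ r, c r d = if d = 0 then 1 else 0 := by
    intro d
    have h : (∑ r, E' r) d (0 : Z) = (1 : Matrix Z Z ℂ) d 0 := by rw [hEsum']
    rw [Matrix.sum_apply, Matrix.one_apply] at h
    exact h
  have hc_conv : ∀ r (d : Z), ∑ k : Z, c r (d - k) * c r k = c r d := by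
    intro r d
    have h : (E' r * E' r) d (0 : Z) = E' r d 0 := by rw [hEP']
    rw [Matrix.mul_apply] at h
    calc ∑ k : Z, c r (d - k) * c r k
        = ∑ k : Z, E' r d k * E' r k 0 := by
          refine Finset.sum_congr rfl fun k _ => ?_
          rw [hcE r d k, hcE r k 0, sub_zero]
      _ = E' r d 0 := h
      _ = c r d := rfl
  have hc_ne : ∀ r, ∃ d : Z, c r d ≠ 0 := by
    intro r
    obtain ⟨i, j, hij⟩ := hEne' r
    exact ⟨i - j, by rw [← hcE r i j]; exact hij⟩
  -- E: Fourier transform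
  let e : AddChar Z ℂ := ZMod.stdAddChar
  have sum_e : ∀ m : Z, ∑ d : Z, e (m * d) = if m = 0 then ((N + 1 : ℕ) : ℂ) else 0 := by
    intro m
    exact_mod_cast aux_sum_e (N + 1) m
  set fh : Fin (N + 1) → Z → ℂ := fun r m => ∑ d : Z, c r d * e (m * d) with hfhdef
  have hfh : ∀ r m, fh r m = ∑ d : Z, c r d * e (m * d) := fun r m => by rw [hfhdef]
  have fh_eq : ∀ r m, fh r m = fh r m * fh r m := by
    intro r m
    calc fh r m = ∑ d : Z, (∑ k : Z, c r (d - k) * c r k) * e (m * d) := by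
          rw [hfh]
          refine Finset.sum_congr rfl fun d _ => ?_
          rw [hc_conv r d]
      _ = ∑ d : Z, ∑ k : Z, c r (d - k) * c r k * e (m * d) := by
          refine Finset.sum_congr rfl fun d _ => ?_
          rw [Finset.sum_mul]
      _ = ∑ k : Z, ∑ d : Z, c r (d - k) * c r k * e (m * d) := Finset.sum_comm
      _ = ∑ k : Z, ∑ d : Z, (c r d * e (m * d)) * (c r k * e (m * k)) := by
          refine Finset.sum_congr rfl fun k _ => ?_
          refine Fintype.sum_equiv (Equiv.subRight k) _ _ fun x => ?_
          simp only [Equiv.subRight_apply]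
          have h1 : e (m * (x - k)) * e (m * k) = e (m * x) := by
            rw [← AddChar.map_add_eq_mul]
            congr 1
            ring
          rw [← h1]
          ring
      _ = ∑ d : Z, ∑ k : Z, (c r d * e (m * d)) * (c r k * e (m * k)) := Finset.sum_comm
      _ = (∑ d : Z, c r d * e (m * d)) * (∑ k : Z, c r k * e (m * k)) :=
          (Finset.sum_mul_sum _ _ _ _).symm
      _ = fh r m * fh r m := by rw [hfh]
  have fh_mem : ∀ r m, fh r m = 0 ∨ fh r m = 1 := by
    intro r m
    have h := fh_eq r m
    have h2 : fh r m * (fh r m - 1) = 0 := by linear_combination (-1 : ℂ) * h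
    rcases mul_eq_zero.mp h2 with h3 | h3
    · exact Or.inl h3
    · exact Or.inr (sub_eq_zero.mp h3)
  have fh_sum : ∀ m : Z, ∑ r, fh r m = 1 := by
    intro m
    calc ∑ r, fh r m = ∑ r, ∑ d : Z, c r d * e (m * d) := by
          refine Finset.sum_congr rfl fun r _ => hfh r m
      _ = ∑ d : Z, ∑ r, c r d * e (m * d) := Finset.sum_comm
      _ = ∑ d : Z, (∑ r, c r d) * e (m * d) := by
          refine Finset.sum_congr rfl fun d _ => (Finset.sum_mul _ _ _).symm
      _ = 1 := by
          rw [Finset.sum_eq_single (0 : Z)]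
          · rw [hc_sum, if_pos rfl, mul_zero, AddChar.map_zero_eq_one, one_mul]
          · intro d _ hd
            rw [hc_sum, if_neg hd, zero_mul]
          · intro h; exact absurd (Finset.mem_univ _) h
  have hinv : ∀ r (d : Z),
      ∑ m : Z, fh r m * e (-(m * d)) = ((N + 1 : ℕ) : ℂ) * c r d := by
    intro r d
    calc ∑ m : Z, fh r m * e (-(m * d))
        = ∑ m : Z, ∑ d' : Z, c r d' * e (m * d') * e (-(m * d)) := by
          refine Finset.sum_congr rfl fun m _ => ?_
          rw [hfh, Finset.sum_mul]
      _ = ∑ d' : Z, ∑ m : Z, c r d' * e (m * d') * e (-(m * d)) := Finset.sum_comm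
      _ = ∑ d' : Z, c r d' * ∑ m : Z, e ((d' - d) * m) := by
          refine Finset.sum_congr rfl fun d' _ => ?_
          rw [Finset.mul_sum]
          refine Finset.sum_congr rfl fun m _ => ?_
          rw [mul_assoc, ← AddChar.map_add_eq_mul]
          have h1 : m * d' + -(m * d) = (d' - d) * m := by ring
          rw [h1]
      _ = ((N + 1 : ℕ) : ℂ) * c r d := by
          rw [Finset.sum_eq_single d]
          · rw [sum_e, sub_self, if_pos rfl, mul_comm]
          · intro d' _ hd'
            rw [sum_e, if_neg (sub_ne_zero.mpr hd'), mul_zero]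
          · intro h; exact absurd (Finset.mem_univ _) h
  have hNC : ((N + 1 : ℕ) : ℂ) ≠ 0 := Nat.cast_ne_zero.mpr (Nat.succ_ne_zero N)
  have hc0 : ∀ r, ∃ m : Z, fh r m = 1 := by
    intro r
    by_contra hcon
    push_neg at hcon
    have hall : ∀ m : Z, fh r m = 0 := by
      intro m
      rcases fh_mem r m with h | h
      · exact h
      · exact absurd h (hcon m)
    obtain ⟨d, hd⟩ := hc_ne r
    apply hd
    have h := hinv r d
    simp only [hall, zero_mul, Finset.sum_const_zero] at h
    rcases mul_eq_zero.mp h.symm with h2 | h2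
    · exact absurd h2 hNC
    · exact h2
  -- F: pigeonhole
  have hcard : ∀ m : Z, (Finset.univ.filter (fun r => fh r m = 1)).card = 1 := by
    intro m
    have h1 : ((Finset.univ.filter (fun r => fh r m = 1)).card : ℂ) = ∑ r, fh r m := by
      rw [Finset.card_filter]
      push_cast
      refine Finset.sum_congr rfl fun r _ => ?_
      rcases fh_mem r m with h | h
      · rw [if_neg (by rw [h]; exact zero_ne_one), h]
      · rw [if_pos h, h]
    rw [fh_sum m] at h1
    exact_mod_cast h1
  have hg : ∀ m : Z, ∃ r, Finset.univ.filter (fun r => fh r m = 1) = {r} :=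
    fun m => Finset.card_eq_one.mp (hcard m)
  choose g hgs using hg
  have hfh_iff : ∀ (m : Z) r, fh r m = 1 ↔ r = g m := by
    intro m r
    constructor
    · intro h
      have hmem : r ∈ Finset.univ.filter (fun r => fh r m = 1) := by
        simp only [Finset.mem_filter, Finset.mem_univ, true_and]; exact h
      rw [hgs m] at hmem
      simpa using hmem
    · intro h
      subst h
      have hmem : g m ∈ ({g m} : Finset (Fin (N + 1))) := Finset.mem_singleton_self _
      rw [← hgs m] at hmem
      exact (Finset.mem_filter.mp hmem).2
  have hsurj : Function.Surjective g := by
    intro r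
    obtain ⟨m, hm⟩ := hc0 r
    exact ⟨m, ((hfh_iff m r).mp hm).symm⟩
  have hbij : Function.Bijective g := by
    rw [Fintype.bijective_iff_surjective_and_card]
    refine ⟨hsurj, ?_⟩
    rw [ZMod.card, Fintype.card_fin]
  let gE : Z ≃ Fin (N + 1) := Equiv.ofBijective g hbij
  have hfh_val : ∀ r (m : Z), fh r m = if m = gE.symm r then 1 else 0 := by
    intro r m
    split_ifs with h
    · refine (hfh_iff m r).mpr ?_
      rw [h]
      exact (gE.apply_symm_apply r).symm
    · rcases fh_mem r m with h0 | h1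
      · exact h0
      · exfalso
        apply h
        have h2 : r = g m := (hfh_iff m r).mp h1
        rw [h2]
        exact (gE.symm_apply_apply m).symm
  -- G: explicit value of c, and conclusion
  have hcval : ∀ r (d : Z), c r d = ((N + 1 : ℕ) : ℂ)⁻¹ * e (-(gE.symm r * d)) := by
    intro r d
    have h := hinv r d
    rw [Finset.sum_eq_single (gE.symm r)] at h
    · rw [hfh_val, if_pos rfl, one_mul] at h
      rw [h, ← mul_assoc, inv_mul_cancel₀ hNC, one_mul]
    · intro b _ hb
      rw [hfh_val, if_neg hb, zero_mul]
    · intro hmem; exact absurd (Finset.mem_univ _) hmem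
  have hmain : ∀ i j : Z, ∑ r, E' r i j * (starRingEnd ℂ) (E' r i j) = ((N + 1 : ℕ) : ℂ)⁻¹ := by
    intro i j
    have hstep : ∀ r : Fin (N + 1),
        E' r i j * (starRingEnd ℂ) (E' r i j) = ((N + 1 : ℕ) : ℂ)⁻¹ * ((N + 1 : ℕ) : ℂ)⁻¹ := by
      intro r
      rw [hcE r i j, hcval r (i - j)]
      have hx : e (-(gE.symm r * (i - j))) * (starRingEnd ℂ) (e (-(gE.symm r * (i - j)))) = 1 := by
        rw [show (e (-(gE.symm r * (i - j))) : ℂ) = ZMod.stdAddChar (-(gE.symm r * (i - j))) from rfl]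
        rw [ZMod.stdAddChar_apply, Complex.mul_conj, Complex.normSq_eq_norm_sq, Circle.norm_coe]
        norm_num
      rw [_root_.map_mul, map_inv₀, Complex.conj_natCast]
      calc ((N + 1 : ℕ) : ℂ)⁻¹ * e (-(gE.symm r * (i - j))) *
            (((N + 1 : ℕ) : ℂ)⁻¹ * (starRingEnd ℂ) (e (-(gE.symm r * (i - j)))))
          = ((N + 1 : ℕ) : ℂ)⁻¹ * ((N + 1 : ℕ) : ℂ)⁻¹ *
            (e (-(gE.symm r * (i - j))) * (starRingEnd ℂ) (e (-(gE.symm r * (i - j))))) := by ring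
        _ = ((N + 1 : ℕ) : ℂ)⁻¹ * ((N + 1 : ℕ) : ℂ)⁻¹ := by rw [hx, mul_one]
    rw [Finset.sum_congr rfl fun r _ => hstep r]
    rw [Finset.sum_const, Finset.card_univ, Fintype.card_fin, nsmul_eq_mul]
    rw [← mul_assoc, mul_inv_cancel₀ hNC, one_mul]
  -- conclude
  ext i j
  simp only [Matrix.sum_apply, Matrix.hadamard_apply, Matrix.map_apply, Matrix.smul_apply,
    Matrix.of_apply, smul_eq_mul, mul_one]
  exact hmain i j
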